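/- Let b1, b2, b3 be rank-4 bubbles such that b3 is a connected sum of b1 and b2 (at some black node of b1 and some white node of b2). Then the bubble dimensions satisfy d̃_{b1} + d̃_{b2} ≥ d̃_{b3} + 2. -/

import Mathlib

/-!  Rank-4 tensorial bubbles and Feynman graphs, following
Carrozza–Lahoche–Oriti, "Renormalizable Group Field Theory beyond melonic
diagrams: an example in rank four". -/

open Finset

/-- A rank-4 bubble: a connected bipartite 4-colored regular graph, given by
finite sets of black and white nodes together with, for each color, a perfect
matching (bijection) between black and white nodes. -/
structure Bubble where
  B : Type
  W : Type
  [fB : Fintype B]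
  [fW : Fintype W]
  [dB : DecidableEq B]
  [dW : DecidableEq W]
  /-- for each color `i`, the perfect matching of color `i` -/
  edge : Fin 4 → B ≃ W
  /-- connectedness: the only subsets of nodes closed under colored adjacency
  are `∅` and `univ` -/
  conn : ∀ S : Finset (B ⊕ W),
    (∀ x ∈ S, ∀ y : B ⊕ W,
      (∃ i : Fin 4, (∃ u : B, x = Sum.inl u ∧ y = Sum.inr (edge i u)) ∨
        (∃ u : B, y = Sum.inl u ∧ x = Sum.inr (edge i u))) → y ∈ S) →
    S = ∅ ∨ S = Finset.univ

attribute [instance] Bubble.fB Bubble.fW Bubble.dB Bubble.dW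

/-- The valency of a bubble: its total number of nodes. -/
def Bubble.valency (b : Bubble) : ℕ := Fintype.card b.B + Fintype.card b.W

/-- Isomorphism of bubbles (color-preserving). -/
def Bubble.Iso (b b' : Bubble) : Prop :=
  ∃ (eB : b.B ≃ b'.B) (eW : b.W ≃ b'.W), ∀ (i : Fin 4) (x : b.B),
    eW (b.edge i x) = b'.edge i (eB x)

/-- The elementary 2-valent bubble. -/
def twoValent : Bubble where
  B := PUnit
  W := PUnit
  edge := fun _ => Equiv.refl PUnit
  conn := by
    intro S hS
    by_cases h : S = ∅
    · exact Or.inl h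
    · right
      obtain ⟨x, hx⟩ := Finset.nonempty_iff_ne_empty.mpr h
      have h1 : (Sum.inl PUnit.unit : PUnit ⊕ PUnit) ∈ S := by
        rcases x with ⟨⟩ | ⟨⟩
        · exact hx
        · exact hS _ hx _ ⟨0, Or.inr ⟨PUnit.unit, rfl, rfl⟩⟩
      have h2 : (Sum.inr PUnit.unit : PUnit ⊕ PUnit) ∈ S :=
        hS _ h1 _ ⟨0, Or.inl ⟨PUnit.unit, rfl, rfl⟩⟩
      ext y
      rcases y with ⟨⟩ | ⟨⟩ <;> simp [h1, h2]

/-- The elementary necklace in which color `1` (index `0`) is paired with the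
color of index `ℓ.succ`, `ℓ : Fin 3`: its four nodes form a 4-cycle along which
double lines with the colors `{0, ℓ.succ}` alternate with double lines carrying
the complementary pair of colors. -/
def elemNecklace (ℓ : Fin 3) : Bubble where
  B := Fin 2
  W := Fin 2
  edge := fun c => if c = 0 ∨ c = ℓ.succ then Equiv.refl (Fin 2) else Equiv.swap 0 1
  conn := by fin_cases ℓ <;> decide

/-- The 4-valent melonic bubble of color `ℓ`. -/
def melon4 (ℓ : Fin 4) : Bubble where
  B := Fin 2
  W := Fin 2
  edge := fun c => if c = ℓ then Equiv.swap 0 1 else Equiv.refl (Fin 2)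
  conn := by fin_cases ℓ <;> decide

/-- The colored matchings of the connected sum of `b₁` and `b₂` at a black node
`n₁` of `b₁` and a white node `n₂` of `b₂`: delete `n₁, n₂` and join the
dangling colored half-lines according to their colors. -/
def connSumEdge (b₁ b₂ : Bubble) (n₁ : b₁.B) (n₂ : b₂.W) (i : Fin 4) :
    ({x : b₁.B // x ≠ n₁} ⊕ b₂.B) → (b₁.W ⊕ {y : b₂.W // y ≠ n₂})
  | Sum.inl x => Sum.inl (b₁.edge i x.1)
  | Sum.inr y =>
      if h : b₂.edge i y = n₂ then Sum.inl (b₁.edge i n₁)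
      else Sum.inr ⟨b₂.edge i y, h⟩

/-- `b₃` is the connected sum of `b₁` and `b₂` at `n₁` and `n₂`. -/
def IsConnSumAt (b₃ b₁ b₂ : Bubble) (n₁ : b₁.B) (n₂ : b₂.W) : Prop :=
  ∃ (eB : b₃.B ≃ ({x : b₁.B // x ≠ n₁} ⊕ b₂.B))
    (eW : b₃.W ≃ (b₁.W ⊕ {y : b₂.W // y ≠ n₂})),
    ∀ (i : Fin 4) (x : b₃.B), eW (b₃.edge i x) = connSumEdge b₁ b₂ n₁ n₂ i (eB x)

/-- The set `𝔹` of necklace bubbles: the 2-valent bubble together with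
everything generated by the three elementary necklaces under connected sums. -/
inductive IsNecklace : Bubble → Prop
  | two {b : Bubble} : b.Iso twoValent → IsNecklace b
  | elem {b : Bubble} (ℓ : Fin 3) : b.Iso (elemNecklace ℓ) → IsNecklace b
  | sum {b b₁ b₂ : Bubble} (n₁ : b₁.B) (n₂ : b₂.W) :
      IsNecklace b₁ → IsNecklace b₂ → IsConnSumAt b b₁ b₂ n₁ n₂ → IsNecklace b

/-- `(n, m)` is a `k`-dipole of the bubble `b`: `n` and `m` are joined by
exactly `k` colored lines. -/
def Bubble.IsDipole (b : Bubble) (n : b.B) (m : b.W) (k : ℕ) : Prop :=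
  (Finset.univ.filter fun i : Fin 4 => b.edge i n = m).card = k

/-- The colored matchings of the bubble obtained from `b` by contracting the
pair of nodes `(n, m)`: delete `n`, `m` and all colored lines between them, and
reconnect the dangling colored half-lines according to their colors. -/
def contractEdge (b : Bubble) (n : b.B) (m : b.W) (i : Fin 4)
    (x : {x : b.B // x ≠ n}) : {y : b.W // y ≠ m} :=
  if h : b.edge i x.1 = m then
    ⟨b.edge i n, fun hm => x.2 ((b.edge i).injective (h.trans hm.symm))⟩
  else ⟨b.edge i x.1, h⟩

/-- `b'` is the bubble obtained from `b` by contracting the dipole `(n, m)`. -/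
def Bubble.IsContractionAt (b' b : Bubble) (n : b.B) (m : b.W) : Prop :=
  ∃ (eB : b'.B ≃ {x : b.B // x ≠ n}) (eW : b'.W ≃ {y : b.W // y ≠ m}),
    ∀ (i : Fin 4) (x : b'.B), eW (b'.edge i x) = contractEdge b n m i (eB x)

/-- A Feynman graph: a finite collection of bubbles (the vertices) together
with 0-lines, each joining a black node to a white node, every node being
incident to at most one 0-line. Nodes not incident to a 0-line carry external
legs. -/
structure FGraph where
  V : Type
  [fV : Fintype V]
  [dV : DecidableEq V]
  bub : V → Bubble
  L : Type
  [fL : Fintype L]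
  [dL : DecidableEq L]
  /-- the black endpoint of a 0-line -/
  lb : L → Σ v : V, (bub v).B
  /-- the white endpoint of a 0-line -/
  lw : L → Σ v : V, (bub v).W
  lb_inj : Function.Injective lb
  lw_inj : Function.Injective lw

attribute [instance] FGraph.fV FGraph.dV FGraph.fL FGraph.dL

/-- The black nodes of a Feynman graph. -/
abbrev FGraph.NB (G : FGraph) : Type := Σ v : G.V, (G.bub v).B

/-- The white nodes of a Feynman graph. -/
abbrev FGraph.NW (G : FGraph) : Type := Σ v : G.V, (G.bub v).W

/-- The colored line of color `i` leaving the black node `x`. -/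
def FGraph.colorMap (G : FGraph) (i : Fin 4) (x : G.NB) : G.NW :=
  ⟨x.1, (G.bub x.1).edge i x.2⟩

/-- `L(𝒢)`: the number of 0-lines. -/
def FGraph.numL (G : FGraph) : ℕ := Fintype.card G.L

/-- `V(𝒢)`: the number of vertices (bubbles). -/
def FGraph.numV (G : FGraph) : ℕ := Fintype.card G.V

/-- `N(𝒢)`: the number of external legs. -/
def FGraph.numN (G : FGraph) : ℕ :=
  (Fintype.card G.NB - Fintype.card G.L) + (Fintype.card G.NW - Fintype.card G.L)

/-- `l'` is the successor of `l` in the face of color `i`: the white endpoint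
of `l'` is joined by a color-`i` line to the black endpoint of `l`. -/
def FGraph.NextRel (G : FGraph) (i : Fin 4) (l l' : G.L) : Prop :=
  G.lw l' = G.colorMap i (G.lb l)

/-- `C` is (the set of 0-lines of) an internal face of color `i`: a cycle of
the successor relation, i.e. a minimal nonempty set in which every 0-line has
its successor. -/
def FGraph.IsFace (G : FGraph) (i : Fin 4) (C : Finset G.L) : Prop :=
  C.Nonempty ∧ (∀ l ∈ C, ∃ l' ∈ C, G.NextRel i l l') ∧
    ∀ D : Finset G.L, D ⊆ C → D.Nonempty →
      (∀ l ∈ D, ∃ l' ∈ D, G.NextRel i l l') → D = C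

/-- `F(𝒢)`: the number of internal faces. -/
noncomputable def FGraph.numF (G : FGraph) : ℕ :=
  Set.ncard {p : Fin 4 × Finset G.L | G.IsFace p.1 p.2}

open Classical in
/-- The line/face incidence matrix `ε`, with internal faces coherently oriented
so that every 0-line occurs in a face it belongs to with matching
orientation. -/
noncomputable def FGraph.epsMat (G : FGraph) :
    Matrix G.L (Fin 4 × Finset G.L) ℚ :=
  fun l p => if G.IsFace p.1 p.2 ∧ l ∈ p.2 then 1 else 0

/-- `R(𝒢)`: the rank of the incidence matrix `ε` over `ℚ`. -/
noncomputable def FGraph.numR (G : FGraph) : ℕ := G.epsMat.rank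

/-- The Abelian degree of divergence `ω(𝒢) = -2L + 3(F - R)`. -/
noncomputable def FGraph.omega (G : FGraph) : ℤ :=
  -2 * (G.numL : ℤ) + 3 * ((G.numF : ℤ) - (G.numR : ℤ))

/-- `ρ(𝒢) = (L - V + 1) - (F - R)`. -/
noncomputable def FGraph.rho (G : FGraph) : ℤ :=
  ((G.numL : ℤ) - (G.numV : ℤ) + 1) - ((G.numF : ℤ) - (G.numR : ℤ))

/-- Adjacency of the vertices `a, b` through a 0-line belonging to `T`. -/
def FGraph.VAdjOn (G : FGraph) (T : Finset G.L) (a b : G.V) : Prop :=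
  ∃ l ∈ T, ((G.lb l).1 = a ∧ (G.lw l).1 = b) ∨ ((G.lb l).1 = b ∧ (G.lw l).1 = a)

/-- Adjacency of the vertices `a, b` through some 0-line. -/
def FGraph.VAdj (G : FGraph) (a b : G.V) : Prop :=
  ∃ l : G.L, ((G.lb l).1 = a ∧ (G.lw l).1 = b) ∨ ((G.lb l).1 = b ∧ (G.lw l).1 = a)

/-- Connectedness of a Feynman graph. -/
def FGraph.Connected (G : FGraph) : Prop :=
  Nonempty G.V ∧ ∀ v v' : G.V, Relation.ReflTransGen G.VAdj v v'

/-- `T` is a spanning tree of 0-lines of `𝒢`. -/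
def FGraph.IsSpanningTree (G : FGraph) (T : Finset G.L) : Prop :=
  T.card + 1 = Fintype.card G.V ∧
    ∀ v v' : G.V, Relation.ReflTransGen (G.VAdjOn T) v v'

/-- Rerouting of a color-`i` half-line through the contracted lines `T`:
as long as the reached white node is an endpoint of a contracted line, jump to
the color-`i` line leaving the black endpoint of that contracted line. -/
noncomputable def FGraph.reroute (G : FGraph) (T : Finset G.L) (i : Fin 4) :
    ℕ → G.NW → G.NW
  | 0, w => w
  | fuel + 1, w =>
      if h : ∃ l ∈ T, G.lw l = w then
        G.reroute T i fuel (G.colorMap i (G.lb h.choose))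
      else w

/-- `G'` is the Feynman graph obtained from `G` by contracting all the 0-lines
of `T` (deleting their end nodes and the colored lines between them, and
reconnecting the dangling colored half-lines by colors). -/
def FGraph.IsQuotientBy (G' G : FGraph) (T : Finset G.L) : Prop :=
  ∃ (eL : G'.L ≃ {l : G.L // l ∉ T})
    (eB : G'.NB ≃ {x : G.NB // ∀ l ∈ T, G.lb l ≠ x})
    (eW : G'.NW ≃ {y : G.NW // ∀ l ∈ T, G.lw l ≠ y}),
    (∀ l' : G'.L,
      (eB (G'.lb l')).1 = G.lb (eL l').1 ∧ (eW (G'.lw l')).1 = G.lw (eL l').1) ∧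
    ∀ (i : Fin 4) (x : G'.NB),
      (eW (G'.colorMap i x)).1 = G.reroute T i T.card (G.colorMap i (eB x).1)

/-- `G'` is the Feynman graph obtained from `G` by contracting the 0-line `l`. -/
def FGraph.IsContractionAt (G' G : FGraph) (l : G.L) : Prop :=
  FGraph.IsQuotientBy G' G {l}

/-- The 0-line `l` is a `k`-dipole: its two end nodes are joined by exactly
`k - 1` colored lines. -/
def FGraph.IsDipoleLine (G : FGraph) (l : G.L) (k : ℕ) : Prop :=
  (Finset.univ.filter fun i : Fin 4 => G.colorMap i (G.lb l) = G.lw l).card = k - 1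

/-- A Feynman graph is 3-dipole contractible if its 0-lines can be contracted
one after the other, each being a 3-dipole at the moment of its contraction. -/
inductive DipoleContractible : FGraph → Prop
  | nil {G : FGraph} : Fintype.card G.L = 0 → DipoleContractible G
  | step {G G' : FGraph} (l : G.L) : G.IsDipoleLine l 3 →
      FGraph.IsContractionAt G' G l → DipoleContractible G' → DipoleContractible G

/-- A necklace graph: a connected Feynman graph all of whose vertices are
necklace bubbles. -/
def FGraph.IsNecklaceGraph (G : FGraph) : Prop :=
  G.Connected ∧ ∀ v : G.V, IsNecklace (G.bub v)

/-- `r ∈ ℛ₂(b)`: a Feynman graph with a single vertex `b` and exactly two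
external legs. -/
def IsR2 (r : FGraph) (b : Bubble) : Prop :=
  Fintype.card r.V = 1 ∧ (∀ v : r.V, (r.bub v).Iso b) ∧ r.numN = 2

/-- `M = max_{r ∈ ℛ₂(b)} ω(r)`. -/
def IsMaxOmega2 (b : Bubble) (M : ℤ) : Prop :=
  (∃ r : FGraph, IsR2 r b ∧ r.omega = M) ∧ ∀ r : FGraph, IsR2 r b → r.omega ≤ M

/-- The bubble dimension `d̃_b = 2 - max_{r ∈ ℛ₂(b)} ω(r)`. -/
def HasBubbleDim (b : Bubble) (d : ℤ) : Prop :=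
  ∃ M : ℤ, IsMaxOmega2 b M ∧ d = 2 - M

open Classical in
/-- The (unique, if any) successor of the 0-line `l` in the face of color `i`. -/
noncomputable def FGraph.nextL (G : FGraph) (i : Fin 4) (l : G.L) : Option G.L :=
  if h : ∃ l' : G.L, G.NextRel i l l' then some h.choose else none

/-- The ordered product of the group elements attached to the `k` consecutive
0-lines of the face of color `i` starting at `l`. -/
noncomputable def FGraph.holPath (G : FGraph) {Γ : Type*} [Monoid Γ]
    (h : G.L → Γ) (i : Fin 4) : ℕ → G.L → Γ
  | 0, _ => 1
  | k + 1, l => h l * (G.nextL i l).elim 1 (fun l' => FGraph.holPath G h i k l')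


/-! ### Auxiliary infrastructure -/

open Classical in
/-- The column of the incidence matrix at index `p`. -/
noncomputable def FGraph.col (G : FGraph) (p : Fin 4 × Finset G.L) : G.L → ℚ :=
  fun l => if G.IsFace p.1 p.2 ∧ l ∈ p.2 then 1 else 0

/-- The set of (internal) faces of `G`. -/
def FGraph.faceSet (G : FGraph) : Set (Fin 4 × Finset G.L) := {p | G.IsFace p.1 p.2}

lemma FGraph.numF_eq (G : FGraph) : G.numF = G.faceSet.ncard := rfl

lemma FGraph.col_eq_transpose (G : FGraph) : G.col = G.epsMat.transpose := by
  funext p l; rfl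

lemma FGraph.numR_eq_finrank (G : FGraph) :
    G.numR = Module.finrank ℚ (Submodule.span ℚ (G.col '' G.faceSet)) := by
  rw [FGraph.numR, Matrix.rank_eq_finrank_span_cols]
  rw [show G.epsMat.col = G.col from (FGraph.col_eq_transpose G).symm]
  have hspan : Submodule.span ℚ (Set.range G.col) = Submodule.span ℚ (G.col '' G.faceSet) := by
    apply le_antisymm
    · rw [Submodule.span_le]
      rintro - ⟨p, rfl⟩
      by_cases h : G.IsFace p.1 p.2
      · exact Submodule.subset_span ⟨p, h, rfl⟩
      · have : G.col p = 0 := by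
          funext l; simp only [FGraph.col]
          rw [if_neg (fun hc => h hc.1)]; rfl
        rw [this]; exact Submodule.zero_mem _
    · exact Submodule.span_mono (by rintro - ⟨p, _, rfl⟩; exact ⟨p, rfl⟩)
  rw [hspan]

lemma FGraph.col_apply_of_face {G : FGraph} {p : Fin 4 × Finset G.L}
    (hp : G.IsFace p.1 p.2) (l : G.L) :
    G.col p l = if l ∈ p.2 then 1 else 0 := by
  simp [FGraph.col, hp]

section Transport

variable {G H : FGraph} (φ : G.L ↪ H.L)

/-- `φ` is an embedding of the lines of `G` into those of `H` preserving and
reflecting the successor relations. -/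
def RelEmb (φ : G.L ↪ H.L) : Prop :=
  ∀ (i : Fin 4) (l l' : G.L), G.NextRel i l l' ↔ H.NextRel i (φ l) (φ l')

lemma face_map (h : RelEmb φ) {i : Fin 4} {C : Finset G.L} (hC : G.IsFace i C) :
    H.IsFace i (C.map φ) := by
  obtain ⟨hne, hcl, hmin⟩ := hC
  refine ⟨hne.map, ?_, ?_⟩
  · rintro l hl
    rw [Finset.mem_map] at hl
    obtain ⟨a, ha, rfl⟩ := hl
    obtain ⟨a', ha', hrel⟩ := hcl a ha
    exact ⟨φ a', Finset.mem_map_of_mem _ ha', (h i a a').mp hrel⟩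
  · intro D hD hDne hDcl
    classical
    set D' : Finset G.L := C.filter (fun a => φ a ∈ D) with hD'
    have hD'sub : D' ⊆ C := Finset.filter_subset _ _
    have hD'ne : D'.Nonempty := by
      obtain ⟨x, hx⟩ := hDne
      obtain ⟨a, ha, rfl⟩ := Finset.mem_map.mp (hD hx)
      exact ⟨a, Finset.mem_filter.mpr ⟨ha, hx⟩⟩
    have hD'cl : ∀ l ∈ D', ∃ l' ∈ D', G.NextRel i l l' := by
      intro a ha
      obtain ⟨ha0, haD⟩ := Finset.mem_filter.mp ha
      obtain ⟨x, hxD, hrel⟩ := hDcl (φ a) haD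
      obtain ⟨a', ha', rfl⟩ := Finset.mem_map.mp (hD hxD)
      exact ⟨a', Finset.mem_filter.mpr ⟨ha', hxD⟩, (h i a a').mpr hrel⟩
    have := hmin D' hD'sub hD'ne hD'cl
    apply Finset.Subset.antisymm hD
    intro x hx
    obtain ⟨a, ha, rfl⟩ := Finset.mem_map.mp hx
    have : a ∈ D' := this ▸ ha
    exact (Finset.mem_filter.mp this).2

lemma face_comap (h : RelEmb φ) {i : Fin 4} {C : Finset H.L} (hC : H.IsFace i C)
    (hR : ∀ x ∈ C, ∃ a, φ a = x) :
    ∃ C' : Finset G.L, G.IsFace i C' ∧ C = C'.map φ := by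
  classical
  obtain ⟨hne, hcl, hmin⟩ := hC
  set C' : Finset G.L := Finset.univ.filter (fun a => φ a ∈ C) with hC'
  have hmapC' : C'.map φ = C := by
    apply Finset.Subset.antisymm
    · intro x hx
      obtain ⟨a, ha, rfl⟩ := Finset.mem_map.mp hx
      exact (Finset.mem_filter.mp ha).2
    · intro x hx
      obtain ⟨a, rfl⟩ := hR x hx
      exact Finset.mem_map_of_mem _ (Finset.mem_filter.mpr ⟨Finset.mem_univ _, hx⟩)
  refine ⟨C', ⟨?_, ?_, ?_⟩, hmapC'.symm⟩
  · obtain ⟨x, hx⟩ := hne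
    obtain ⟨a, rfl⟩ := hR x hx
    exact ⟨a, Finset.mem_filter.mpr ⟨Finset.mem_univ _, hx⟩⟩
  · intro a ha
    obtain ⟨x, hx, hrel⟩ := hcl (φ a) ((Finset.mem_filter.mp ha).2)
    obtain ⟨a', rfl⟩ := hR x hx
    exact ⟨a', Finset.mem_filter.mpr ⟨Finset.mem_univ _, hx⟩, (h i a a').mpr hrel⟩
  · intro D hD hDne hDcl
    have himg : D.map φ ⊆ C := by
      intro x hx
      obtain ⟨a, ha, rfl⟩ := Finset.mem_map.mp hx
      exact (Finset.mem_filter.mp (hD ha)).2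
    have himgcl : ∀ x ∈ D.map φ, ∃ x' ∈ D.map φ, H.NextRel i x x' := by
      intro x hx
      obtain ⟨a, ha, rfl⟩ := Finset.mem_map.mp hx
      obtain ⟨a', ha', hrel⟩ := hDcl a ha
      exact ⟨φ a', Finset.mem_map_of_mem _ ha', (h i a a').mp hrel⟩
    have := hmin (D.map φ) himg (hDne.map) himgcl
    apply Finset.Subset.antisymm hD
    intro a ha
    have : φ a ∈ D.map φ := by rw [this, ← hmapC']; exact Finset.mem_map_of_mem _ ha
    obtain ⟨a', ha', he⟩ := Finset.mem_map.mp this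
    rwa [← φ.injective he]

end Transport

section ExtZero

open Classical in
/-- Extension by zero along an injection, as a linear map. -/
noncomputable def extZero {A B : Type*} (φ : A ↪ B) : (A → ℚ) →ₗ[ℚ] (B → ℚ) where
  toFun f := fun x => if h : ∃ a, φ a = x then f h.choose else 0
  map_add' f g := by
    funext x
    by_cases h : ∃ a, φ a = x <;> simp [h]
  map_smul' c f := by
    funext x
    by_cases h : ∃ a, φ a = x <;> simp [h]

lemma extZero_apply_emb {A B : Type*} (φ : A ↪ B) (f : A → ℚ) (a : A) :
    extZero φ f (φ a) = f a := by
  have h : ∃ a', φ a' = φ a := ⟨a, rfl⟩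
  simp only [extZero, LinearMap.coe_mk, AddHom.coe_mk, dif_pos h]
  rw [φ.injective h.choose_spec]

lemma extZero_apply_not {A B : Type*} (φ : A ↪ B) (f : A → ℚ) (x : B)
    (hx : ¬∃ a, φ a = x) : extZero φ f x = 0 := by
  simp only [extZero, LinearMap.coe_mk, AddHom.coe_mk, dif_neg hx]

lemma extZero_injective {A B : Type*} (φ : A ↪ B) : Function.Injective (extZero φ) := by
  intro f g h
  funext a
  have := congrFun h (φ a)
  rwa [extZero_apply_emb, extZero_apply_emb] at this

lemma finrank_span_image_extZero {A B : Type*} (φ : A ↪ B) (s : Set (A → ℚ)) :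
    Module.finrank ℚ (Submodule.span ℚ (extZero φ '' s)) =
      Module.finrank ℚ (Submodule.span ℚ s) := by
  rw [← Submodule.map_span]
  exact (Submodule.equivMapOfInjective (extZero φ) (extZero_injective φ)
    (Submodule.span ℚ s)).finrank_eq.symm

/-- The column of a mapped face is the extension by zero of the original column. -/
lemma col_map_face {G H : FGraph} (φ : G.L ↪ H.L) (h : RelEmb φ)
    {i : Fin 4} {C : Finset G.L} (hC : G.IsFace i C) :
    H.col (i, C.map φ) = extZero φ (G.col (i, C)) := by
  funext x
  by_cases hx : ∃ a, φ a = x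
  · obtain ⟨a, rfl⟩ := hx
    rw [extZero_apply_emb]
    rw [FGraph.col_apply_of_face (p := (i, C.map φ)) (face_map φ h hC),
      FGraph.col_apply_of_face (p := (i, C)) hC]
    simp only [Finset.mem_map]
    congr 1
    simp only [eq_iff_iff]
    constructor
    · rintro ⟨a', ha', he⟩; rwa [← φ.injective he]
    · intro ha; exact ⟨a, ha, rfl⟩
  · rw [extZero_apply_not φ _ _ hx]
    rw [FGraph.col_apply_of_face (p := (i, C.map φ)) (face_map φ h hC)]
    rw [if_neg]
    intro hc
    obtain ⟨a, _, he⟩ := Finset.mem_map.mp hc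
    exact hx ⟨a, he⟩

end ExtZero

lemma finrank_span_le_ncard {V : Type*} [AddCommGroup V] [Module ℚ V]
    (s : Set V) (hs : s.Finite) :
    Module.finrank ℚ (Submodule.span ℚ s) ≤ s.ncard := by
  have h1 := finrank_span_finset_le_card (R := ℚ) (M := V) hs.toFinset
  rw [Set.Finite.coe_toFinset] at h1
  have h2 : s.ncard = hs.toFinset.card := Set.ncard_eq_toFinset_card s hs
  rw [h2]
  simpa [Set.finrank] using h1

/-! ### Standard single-vertex graphs -/

lemma Bubble.Iso.refl (b : Bubble) : b.Iso b :=
  ⟨Equiv.refl _, Equiv.refl _, fun _ _ => rfl⟩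

/-- Injectivity conditions for a set of 0-lines on a single bubble. -/
def Inj (b : Bubble) (S : Finset (b.B × b.W)) : Prop :=
  (∀ p ∈ S, ∀ q ∈ S, p.1 = q.1 → p = q) ∧ (∀ p ∈ S, ∀ q ∈ S, p.2 = q.2 → p = q)

/-- The single-vertex Feynman graph on the bubble `b` with 0-lines `S`. -/
def stdG (b : Bubble) (S : Finset (b.B × b.W)) (hS : Inj b S) : FGraph where
  V := PUnit
  bub _ := b
  L := {p // p ∈ S}
  lb l := ⟨PUnit.unit, l.1.1⟩
  lw l := ⟨PUnit.unit, l.1.2⟩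
  lb_inj := by
    intro a c h
    simp only [Sigma.mk.inj_iff, heq_eq_eq, true_and] at h
    exact Subtype.ext (hS.1 a.1 a.2 c.1 c.2 h)
  lw_inj := by
    intro a c h
    simp only [Sigma.mk.inj_iff, heq_eq_eq, true_and] at h
    exact Subtype.ext (hS.2 a.1 a.2 c.1 c.2 h)

lemma stdG_nextRel (b : Bubble) (S : Finset (b.B × b.W)) (hS : Inj b S)
    (i : Fin 4) (l l' : (stdG b S hS).L) :
    (stdG b S hS).NextRel i l l' ↔ l'.1.2 = b.edge i l.1.1 := by
  simp only [FGraph.NextRel, FGraph.colorMap, stdG, Sigma.mk.inj_iff, heq_eq_eq, true_and]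
  exact Iff.rfl

lemma stdG_numL (b : Bubble) (S : Finset (b.B × b.W)) (hS : Inj b S) :
    (stdG b S hS).numL = S.card := Fintype.card_coe _

lemma stdG_cardNB (b : Bubble) (S : Finset (b.B × b.W)) (hS : Inj b S) :
    Fintype.card (stdG b S hS).NB = Fintype.card b.B := by
  simp [FGraph.NB, stdG]
  exact Fintype.card_congr (Equiv.uniqueSigma _)

lemma stdG_cardNW (b : Bubble) (S : Finset (b.B × b.W)) (hS : Inj b S) :
    Fintype.card (stdG b S hS).NW = Fintype.card b.W := by
  simp [FGraph.NW, stdG]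
  exact Fintype.card_congr (Equiv.uniqueSigma _)

lemma isR2_stdG {b : Bubble} {S : Finset (b.B × b.W)} (hS : Inj b S)
    (h1 : S.card + 1 = Fintype.card b.B) (h2 : S.card + 1 = Fintype.card b.W) :
    IsR2 (stdG b S hS) b := by
  refine ⟨by simp [stdG]; exact Fintype.card_unique, fun _ => Bubble.Iso.refl b, ?_⟩
  rw [FGraph.numN, stdG_cardNB, stdG_cardNW]
  have : Fintype.card (stdG b S hS).L = S.card := stdG_numL b S hS
  rw [this]
  omega

/-! ### Invariance of `ω` under line-equivalences -/

lemma omega_congr {G H : FGraph} (e : G.L ≃ H.L)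
    (he : ∀ (i : Fin 4) (l l' : G.L), G.NextRel i l l' ↔ H.NextRel i (e l) (e l')) :
    H.omega = G.omega := by
  have hrel : RelEmb e.toEmbedding := he
  set j : Fin 4 × Finset G.L → Fin 4 × Finset H.L :=
    fun p => (p.1, p.2.map e.toEmbedding) with hj
  have hjinj : Function.Injective j := by
    intro p q h
    have h1 : p.1 = q.1 := congrArg (fun t => t.1) h
    have h2 : p.2.map e.toEmbedding = q.2.map e.toEmbedding := congrArg (fun t => t.2) h
    have h3 : p.2 = q.2 := Finset.map_injective _ h2
    exact Prod.ext h1 h3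
  have himg : j '' G.faceSet = H.faceSet := by
    apply Set.Subset.antisymm
    · rintro - ⟨p, hp, rfl⟩
      exact face_map e.toEmbedding hrel hp
    · rintro ⟨q1, q2⟩ hq
      obtain ⟨C', hC', hCe⟩ := face_comap e.toEmbedding hrel hq
        (fun x _ => ⟨e.symm x, by simp⟩)
      refine ⟨(q1, C'), hC', ?_⟩
      rw [hj]; simp only; rw [← hCe]
  have hF : H.numF = G.numF := by
    rw [FGraph.numF_eq, FGraph.numF_eq, ← himg, Set.ncard_image_of_injective _ hjinj]
  have hL : H.numL = G.numL := (Fintype.card_congr e).symm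
  have hR : H.numR = G.numR := by
    rw [FGraph.numR_eq_finrank, FGraph.numR_eq_finrank]
    set Λ := LinearEquiv.funCongrLeft ℚ ℚ e.symm with hΛ
    have hcol : ∀ p ∈ G.faceSet, H.col (j p) = Λ (G.col p) := by
      intro p hp
      funext x
      have hface : H.IsFace (j p).1 (j p).2 := face_map e.toEmbedding hrel hp
      rw [FGraph.col_apply_of_face hface]
      have : Λ (G.col p) x = G.col p (e.symm x) := rfl
      rw [this, FGraph.col_apply_of_face hp]
      congr 1
      simp only [hj, eq_iff_iff]
      exact Finset.mem_map_equiv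
    have himgcol : H.col '' H.faceSet = (Λ : (G.L → ℚ) →ₗ[ℚ] (H.L → ℚ)) '' (G.col '' G.faceSet) := by
      rw [← himg, ← Set.image_comp, ← Set.image_comp]
      exact Set.image_congr (fun p hp => hcol p hp)
    rw [himgcol, ← Submodule.map_span]
    exact LinearEquiv.finrank_map_eq Λ _
  rw [FGraph.omega, FGraph.omega, hF, hL, hR]

/-! ### Normalization of 2-point graphs -/

lemma normalizeR2 {r : FGraph} {b : Bubble} (hr : IsR2 r b) :
    ∃ (S : Finset (b.B × b.W)) (hS : Inj b S),
      S.card + 1 = Fintype.card b.B ∧ S.card + 1 = Fintype.card b.W ∧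
      (stdG b S hS).omega = r.omega := by
  classical
  obtain ⟨hV1, hiso, hN⟩ := hr
  obtain ⟨v₀, hv₀⟩ := Fintype.card_eq_one_iff.mp hV1
  choose eB eW hcompat using hiso
  -- the node identifications
  have hBinj : Function.Injective (fun x : r.NB => eB x.1 x.2) := by
    rintro ⟨vx, a⟩ ⟨vy, c⟩ h
    have hxy : vx = vy := (hv₀ vx).trans (hv₀ vy).symm
    subst hxy
    simp only at h
    exact Sigma.ext rfl (heq_of_eq ((eB vx).injective h))
  have hBsurj : Function.Surjective (fun x : r.NB => eB x.1 x.2) := by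
    intro w; exact ⟨⟨v₀, (eB v₀).symm w⟩, by simp⟩
  have hWinj : Function.Injective (fun x : r.NW => eW x.1 x.2) := by
    rintro ⟨vx, a⟩ ⟨vy, c⟩ h
    have hxy : vx = vy := (hv₀ vx).trans (hv₀ vy).symm
    subst hxy
    simp only at h
    exact Sigma.ext rfl (heq_of_eq ((eW vx).injective h))
  have hWsurj : Function.Surjective (fun x : r.NW => eW x.1 x.2) := by
    intro w; exact ⟨⟨v₀, (eW v₀).symm w⟩, by simp⟩
  set EB : r.NB ≃ b.B := Equiv.ofBijective _ ⟨hBinj, hBsurj⟩ with hEB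
  set EW : r.NW ≃ b.W := Equiv.ofBijective _ ⟨hWinj, hWsurj⟩ with hEW
  have hcomm : ∀ (i : Fin 4) (x : r.NB), EW (r.colorMap i x) = b.edge i (EB x) := by
    rintro i ⟨v, a⟩
    exact hcompat v i a
  -- cardinalities
  have hcardB : Fintype.card r.NB = Fintype.card b.B := Fintype.card_congr EB
  have hcardW : Fintype.card r.NW = Fintype.card b.W := Fintype.card_congr EW
  have hBW : Fintype.card b.B = Fintype.card b.W := Fintype.card_congr (b.edge 0)
  have hLB : Fintype.card r.L ≤ Fintype.card r.NB := Fintype.card_le_of_injective r.lb r.lb_inj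
  have hLcard : Fintype.card r.L + 1 = Fintype.card b.B := by
    rw [FGraph.numN] at hN
    omega
  -- the line set
  set f : r.L → b.B × b.W := fun l => (EB (r.lb l), EW (r.lw l)) with hf
  have hfinj : Function.Injective f := by
    intro l l' h
    exact r.lb_inj (EB.injective (congrArg Prod.fst h))
  set S : Finset (b.B × b.W) := Finset.image f Finset.univ with hSdef
  have hmemS : ∀ p ∈ S, ∃ l, f l = p := by
    intro p hp
    obtain ⟨l, _, hl⟩ := Finset.mem_image.mp hp
    exact ⟨l, hl⟩
  have hS : Inj b S := by
    constructor
    · intro p hp q hq hpq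
      obtain ⟨l, rfl⟩ := hmemS p hp
      obtain ⟨l', rfl⟩ := hmemS q hq
      have : l = l' := r.lb_inj (EB.injective hpq)
      rw [this]
    · intro p hp q hq hpq
      obtain ⟨l, rfl⟩ := hmemS p hp
      obtain ⟨l', rfl⟩ := hmemS q hq
      have : l = l' := r.lw_inj (EW.injective hpq)
      rw [this]
  have hScard : S.card = Fintype.card r.L := by
    rw [hSdef, Finset.card_image_of_injective _ hfinj, Finset.card_univ]
  refine ⟨S, hS, by omega, by omega, ?_⟩
  -- the line equivalence
  have hφbij : Function.Bijective (fun l : r.L =>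
      (⟨f l, Finset.mem_image_of_mem f (Finset.mem_univ l)⟩ : (stdG b S hS).L)) := by
    constructor
    · intro l l' h
      exact hfinj (congrArg Subtype.val h)
    · rintro ⟨p, hp⟩
      obtain ⟨l, hl⟩ := hmemS p hp
      exact ⟨l, Subtype.ext hl⟩
  set φ : r.L ≃ (stdG b S hS).L := Equiv.ofBijective _ hφbij with hφ
  apply omega_congr φ
  intro i l l'
  rw [stdG_nextRel]
  show r.NextRel i l l' ↔ (f l').2 = b.edge i (f l).1
  rw [hf]
  show r.NextRel i l l' ↔ EW (r.lw l') = b.edge i (EB (r.lb l))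
  rw [← hcomm i (r.lb l)]
  constructor
  · intro h; rw [FGraph.NextRel] at h; rw [h]
  · intro h; exact EW.injective h

/-! ### Faces of vacuum graphs are orbits -/

open Equiv in
/-- The orbit of `l` under the permutation `σ`, as a `Finset`. -/
noncomputable def orb {α : Type*} [Fintype α] (σ : Equiv.Perm α) (l : α) : Finset α :=
  @Finset.filter _ (σ.SameCycle l) (Classical.decPred _) Finset.univ

lemma mem_orb {α : Type*} [Fintype α] {σ : Equiv.Perm α} {l x : α} :
    x ∈ orb σ l ↔ σ.SameCycle l x := by
  simp [orb]

lemma orb_self {α : Type*} [Fintype α] (σ : Equiv.Perm α) (l : α) : l ∈ orb σ l :=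
  mem_orb.mpr (Equiv.Perm.SameCycle.refl σ l)

lemma apply_mem_orb {α : Type*} [Fintype α] {σ : Equiv.Perm α} {l x : α}
    (hx : x ∈ orb σ l) : σ x ∈ orb σ l :=
  mem_orb.mpr (mem_orb.mp hx).apply_right

lemma pow_mem_closed {α : Type*} [Fintype α] {σ : Equiv.Perm α} {D : Finset α}
    (hD : ∀ x ∈ D, σ x ∈ D) (k : ℕ) : ∀ z ∈ D, (σ ^ k) z ∈ D := by
  induction k with
  | zero => intro z hz; simpa using hz
  | succ n ih =>
    intro z hz
    have : (σ ^ (n + 1)) z = (σ ^ n) (σ z) := by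
      rw [pow_succ]; rfl
    rw [this]
    exact ih (σ z) (hD z hz)

lemma orb_subset_closed {α : Type*} [Fintype α] {σ : Equiv.Perm α} {D : Finset α} {l : α}
    (hD : ∀ x ∈ D, σ x ∈ D) (hl : l ∈ D) : orb σ l ⊆ D := by
  intro y hy
  obtain ⟨k, -, hk⟩ := (mem_orb.mp hy).exists_pow_eq'
  rw [← hk]
  exact pow_mem_closed hD k l hl

lemma orb_eq_orb {α : Type*} [Fintype α] {σ : Equiv.Perm α} {l z : α}
    (h : z ∈ orb σ l) : orb σ l = orb σ z := by
  ext y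
  rw [mem_orb, mem_orb]
  have hlz := mem_orb.mp h
  exact ⟨fun hy => hlz.symm.trans hy, fun hy => hlz.trans hy⟩

/-- `σ i` realizes the color-`i` successor map of `G`. -/
def IsSucc (G : FGraph) (σ : Fin 4 → Equiv.Perm G.L) : Prop :=
  ∀ (i : Fin 4) (l l' : G.L), G.NextRel i l l' ↔ l' = σ i l

lemma isFace_orb {G : FGraph} {σ : Fin 4 → Equiv.Perm G.L} (hσ : IsSucc G σ)
    (i : Fin 4) (l : G.L) : G.IsFace i (orb (σ i) l) := by
  refine ⟨⟨l, orb_self _ _⟩, ?_, ?_⟩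
  · intro x hx
    exact ⟨σ i x, apply_mem_orb hx, (hσ i x (σ i x)).mpr rfl⟩
  · intro D hD hDne hDcl
    obtain ⟨z, hz⟩ := hDne
    have hDcl' : ∀ x ∈ D, σ i x ∈ D := by
      intro x hx
      obtain ⟨l', hl', hrel⟩ := hDcl x hx
      rwa [(hσ i x l').mp hrel] at hl'
    have : orb (σ i) l = orb (σ i) z := orb_eq_orb (hD hz)
    rw [this] at hD ⊢
    exact Finset.Subset.antisymm hD (orb_subset_closed hDcl' hz)

lemma face_eq_orb {G : FGraph} {σ : Fin 4 → Equiv.Perm G.L} (hσ : IsSucc G σ)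
    {i : Fin 4} {C : Finset G.L} (hC : G.IsFace i C) {l : G.L} (hl : l ∈ C) :
    C = orb (σ i) l := by
  have hcl : ∀ x ∈ C, σ i x ∈ C := by
    intro x hx
    obtain ⟨l', hl', hrel⟩ := hC.2.1 x hx
    rwa [(hσ i x l').mp hrel] at hl'
  have hsub : orb (σ i) l ⊆ C := orb_subset_closed hcl hl
  have hfc := isFace_orb hσ i l
  exact (hC.2.2 (orb (σ i) l) hsub ⟨l, orb_self _ _⟩ hfc.2.1).symm

lemma sum_col_color {G : FGraph} {σ : Fin 4 → Equiv.Perm G.L} (hσ : IsSucc G σ)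
    (i : Fin 4) {Φ : Finset (Fin 4 × Finset G.L)}
    (hΦ : ∀ p, p ∈ Φ ↔ (G.IsFace p.1 p.2 ∧ p.1 = i)) :
    ∑ p ∈ Φ, G.col p = 1 := by
  classical
  funext l
  rw [Finset.sum_apply]
  have h1 : ∀ p ∈ Φ, G.col p l = if l ∈ p.2 then (1 : ℚ) else 0 := by
    intro p hp
    exact FGraph.col_apply_of_face ((hΦ p).mp hp).1 l
  rw [Finset.sum_congr rfl h1, Finset.sum_boole]
  have h2 : Φ.filter (fun p => l ∈ p.2) = {(i, orb (σ i) l)} := by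
    ext q
    simp only [Finset.mem_filter, Finset.mem_singleton, hΦ]
    constructor
    · rintro ⟨⟨hface, hfst⟩, hmem⟩
      have hq2 : q.2 = orb (σ q.1) l := face_eq_orb hσ hface hmem
      have : q = (q.1, orb (σ q.1) l) := by rw [← hq2]
      rw [this, hfst]
    · rintro rfl
      exact ⟨⟨isFace_orb hσ i l, rfl⟩, orb_self _ _⟩
  rw [h2]
  simp

/-! ### The vacuum deletion lemma -/

lemma Inj.mono {b : Bubble} {S T : Finset (b.B × b.W)} (h : Inj b S) (hT : T ⊆ S) :
    Inj b T :=
  ⟨fun p hp q hq => h.1 p (hT hp) q (hT hq), fun p hp q hq => h.2 p (hT hp) q (hT hq)⟩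

open Submodule Module in
lemma vacuum_delete {b : Bubble} {S : Finset (b.B × b.W)} (hS : Inj b S)
    (hfullB : ∀ x : b.B, ∃ p ∈ S, p.1 = x) (hfullW : ∀ w : b.W, ∃ p ∈ S, p.2 = w)
    {l₀ : b.B × b.W} (hl₀ : l₀ ∈ S) :
    (stdG b (S.erase l₀) (hS.mono (Finset.erase_subset _ _))).omega
      = (stdG b S hS).omega - 7 := by
  classical
  set G : FGraph := stdG b S hS with hGdef
  set G' : FGraph := stdG b (S.erase l₀) (hS.mono (Finset.erase_subset _ _)) with hG'def
  -- the successor permutations of the vacuum graph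
  have hbij1 : Function.Bijective (fun l : G.L => l.1.1) := by
    constructor
    · intro a c h; exact Subtype.ext (hS.1 a.1 a.2 c.1 c.2 h)
    · intro x; obtain ⟨p, hp, hx⟩ := hfullB x; exact ⟨⟨p, hp⟩, hx⟩
  have hbij2 : Function.Bijective (fun l : G.L => l.1.2) := by
    constructor
    · intro a c h; exact Subtype.ext (hS.2 a.1 a.2 c.1 c.2 h)
    · intro x; obtain ⟨p, hp, hx⟩ := hfullW x; exact ⟨⟨p, hp⟩, hx⟩
  set eF : G.L ≃ b.B := Equiv.ofBijective _ hbij1 with heF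
  set eS : G.L ≃ b.W := Equiv.ofBijective _ hbij2 with heS
  set σ : Fin 4 → Equiv.Perm G.L := fun i => (eF.trans (b.edge i)).trans eS.symm with hσdef
  have hnr : ∀ (i : Fin 4) (l l' : G.L), G.NextRel i l l' ↔ l'.1.2 = b.edge i l.1.1 :=
    fun i l l' => stdG_nextRel b S hS i l l'
  have hσ : IsSucc G σ := by
    intro i l l'
    rw [hnr i l l']
    have h1 : σ i l = eS.symm (b.edge i (l.1.1)) := rfl
    rw [h1, Equiv.eq_symm_apply]
    exact Iff.rfl
  -- the line embedding
  have hsub : S.erase l₀ ⊆ S := Finset.erase_subset _ _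
  have hnr' : ∀ (i : Fin 4) (l l' : G'.L), G'.NextRel i l l' ↔ l'.1.2 = b.edge i l.1.1 :=
    fun i l l' => stdG_nextRel b (S.erase l₀) (hS.mono (Finset.erase_subset _ _)) i l l'
  set φ : G'.L ↪ G.L :=
    ⟨fun l => ⟨l.1, hsub l.2⟩, by
      intro a c h
      apply Subtype.ext
      exact congrArg (fun (x : {p // p ∈ S}) => x.1) h⟩ with hφdef
  have hrel : RelEmb φ := by
    intro i l l'
    rw [hnr' i l l', hnr i (φ l) (φ l')]
    exact Iff.rfl
  set l₀' : G.L := ⟨l₀, hl₀⟩ with hl₀'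
  have hrange : ∀ x : G.L, x ≠ l₀' → ∃ a, φ a = x := by
    intro x hx
    have hne : x.1 ≠ l₀ := fun h => hx (Subtype.ext h)
    exact ⟨⟨x.1, Finset.mem_erase.mpr ⟨hne, x.2⟩⟩, rfl⟩
  set j : Fin 4 × Finset G'.L → Fin 4 × Finset G.L := fun p => (p.1, p.2.map φ) with hjdef
  have hjinj : Function.Injective j := by
    intro p q h
    have h1 : p.1 = q.1 := congrArg (fun t => t.1) h
    have h2 : p.2.map φ = q.2.map φ := congrArg (fun t => t.2) h
    exact Prod.ext h1 (Finset.map_injective _ h2)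
  set Avoid : Set (Fin 4 × Finset G.L) := {q | G.IsFace q.1 q.2 ∧ l₀' ∉ q.2} with hAvoid
  have himg : j '' G'.faceSet = Avoid := by
    apply Set.Subset.antisymm
    · rintro - ⟨p, hp, rfl⟩
      refine ⟨face_map φ hrel hp, ?_⟩
      intro hmem
      obtain ⟨a, ha, hae⟩ := Finset.mem_map.mp hmem
      have hval : a.1 = l₀ := congrArg Subtype.val hae
      exact (Finset.mem_erase.mp a.2).1 hval
    · rintro ⟨q1, q2⟩ ⟨hface, hnot⟩
      obtain ⟨C', hC', hCe⟩ := face_comap φ hrel hface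
        (fun x hx => hrange x (fun h => hnot (h ▸ hx)))
      exact ⟨(q1, C'), hC', by simp only [hjdef]; rw [← hCe]⟩
  have hF' : G'.numF = Avoid.ncard := by
    rw [FGraph.numF_eq, ← himg, Set.ncard_image_of_injective _ hjinj]
  set Through : Set (Fin 4 × Finset G.L) :=
    Set.range (fun i : Fin 4 => (i, orb (σ i) l₀')) with hThrough
  have hTcard : Through.ncard = 4 := by
    rw [hThrough, ← Set.image_univ,
      Set.ncard_image_of_injective _ (fun a c h => congrArg (fun t => t.1) h)]
    simp [Set.ncard_univ]
  have hsplit : G.faceSet = Avoid ∪ Through := by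
    ext q
    constructor
    · intro hq
      by_cases h : l₀' ∈ q.2
      · refine Or.inr ⟨q.1, ?_⟩
        have hq2 : q = (q.1, orb (σ q.1) l₀') := by
          rw [← face_eq_orb hσ hq h]
        exact hq2.symm
      · exact Or.inl ⟨hq, h⟩
    · rintro (⟨hf, -⟩ | ⟨i, rfl⟩)
      · exact hf
      · exact isFace_orb hσ i l₀'
  have hdisj : Disjoint Avoid Through := by
    rw [Set.disjoint_left]
    rintro q ⟨-, hnot⟩ ⟨i, rfl⟩
    exact hnot (orb_self _ _)
  have hFsplit : G.numF = Avoid.ncard + 4 := by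
    rw [FGraph.numF_eq, hsplit, Set.ncard_union_eq hdisj (Set.toFinite _) (Set.toFinite _),
      hTcard]
  -- rank
  set U : Submodule ℚ (G.L → ℚ) := span ℚ (G.col '' G.faceSet) with hU
  set U₀ : Submodule ℚ (G.L → ℚ) := span ℚ (G.col '' Avoid) with hU₀
  have hone : (1 : G.L → ℚ) ∈ U := by
    have hsum0 := sum_col_color hσ 0
      (Φ := Finset.univ.filter (fun p : Fin 4 × Finset G.L => G.IsFace p.1 p.2 ∧ p.1 = 0))
      (fun p => by simp)
    rw [hU, ← hsum0]
    exact Submodule.sum_mem _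
      (fun p hp => Submodule.subset_span ⟨p, (Finset.mem_filter.mp hp).2.1, rfl⟩)
  have hker : ∀ f ∈ U₀, f l₀' = 0 := by
    intro f hf
    have : U₀ ≤ LinearMap.ker (LinearMap.proj l₀' : (G.L → ℚ) →ₗ[ℚ] ℚ) := by
      rw [hU₀, span_le]
      rintro - ⟨q, ⟨hface, hnot⟩, rfl⟩
      rw [SetLike.mem_coe, LinearMap.mem_ker]
      show G.col q l₀' = 0
      rw [FGraph.col_apply_of_face hface, if_neg hnot]
    exact LinearMap.mem_ker.mp (this hf)
  have honeNot : (1 : G.L → ℚ) ∉ U₀ := by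
    intro h
    have := hker _ h
    simp at this
  have hUeq : U = U₀ ⊔ span ℚ {(1 : G.L → ℚ)} := by
    apply le_antisymm
    · rw [hU, span_le]
      rintro - ⟨q, hq, rfl⟩
      by_cases h : l₀' ∈ q.2
      · have hq2 : q.2 = orb (σ q.1) l₀' := face_eq_orb hσ hq h
        set Φ : Finset (Fin 4 × Finset G.L) := Finset.univ.filter
          (fun p : Fin 4 × Finset G.L => G.IsFace p.1 p.2 ∧ p.1 = q.1) with hΦ
        have hsum : ∑ p ∈ Φ, G.col p = 1 := sum_col_color hσ q.1 (fun p => by simp [hΦ])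
        have hqΦ : q ∈ Φ := Finset.mem_filter.mpr ⟨Finset.mem_univ _, hq, rfl⟩
        have hrest : ∀ p ∈ Φ.erase q, G.col p ∈ G.col '' Avoid := by
          intro p hp
          obtain ⟨hpne, hpΦ⟩ := Finset.mem_erase.mp hp
          obtain ⟨hpf, hpc⟩ := (Finset.mem_filter.mp hpΦ).2
          refine ⟨p, ⟨hpf, ?_⟩, rfl⟩
          intro hmem
          apply hpne
          have hp2 : p.2 = orb (σ p.1) l₀' := face_eq_orb hσ hpf hmem
          refine Prod.ext hpc ?_
          rw [hp2, hpc, ← hq2]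
        have hColq : G.col q = 1 - ∑ p ∈ Φ.erase q, G.col p := by
          refine eq_sub_of_add_eq ?_
          rw [← hsum]
          exact Finset.add_sum_erase Φ G.col hqΦ
        rw [hColq]
        refine Submodule.sub_mem _ ?_ ?_
        · exact Submodule.mem_sup_right (Submodule.subset_span (Set.mem_singleton _))
        · exact Submodule.mem_sup_left
            (Submodule.sum_mem _ (fun p hp => Submodule.subset_span (hrest p hp)))
      · exact Submodule.mem_sup_left (Submodule.subset_span ⟨q, ⟨hq, h⟩, rfl⟩)
    · apply sup_le
      · rw [hU₀, hU]
        exact span_mono (Set.image_mono (fun q hq => hq.1))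
      · rw [span_le]
        intro x hx
        rw [Set.mem_singleton_iff] at hx
        subst hx
        exact hone
  have hone_ne : (1 : G.L → ℚ) ≠ 0 := by
    intro h
    have := congrFun h l₀'
    simp at this
  have hr_up : finrank ℚ U ≤ finrank ℚ U₀ + 1 := by
    rw [hUeq]
    refine le_trans (Submodule.finrank_add_le_finrank_add_finrank _ _) ?_
    rw [finrank_span_singleton hone_ne]
  have hr_lo : finrank ℚ U₀ < finrank ℚ U := by
    apply Submodule.finrank_lt_finrank_of_lt
    have hle : U₀ ≤ U := by rw [hUeq]; exact le_sup_left
    refine lt_of_le_of_ne hle (fun h => honeNot ?_)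
    rw [h]
    exact hone
  have hRsplit : G.numR = finrank ℚ U₀ + 1 := by
    have h1 : G.numR = finrank ℚ U := G.numR_eq_finrank
    omega
  have hR' : G'.numR = finrank ℚ U₀ := by
    rw [G'.numR_eq_finrank]
    have himgcol : G.col '' Avoid = extZero φ '' (G'.col '' G'.faceSet) := by
      rw [← himg, ← Set.image_comp, ← Set.image_comp]
      exact Set.image_congr (fun p hp => col_map_face φ hrel hp)
    rw [hU₀, himgcol, finrank_span_image_extZero]
  -- line counts
  have hLG : G.numL = S.card := stdG_numL b S hS
  have hLG' : G'.numL = S.card - 1 := by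
    have h := stdG_numL b (S.erase l₀) (hS.mono (Finset.erase_subset _ _))
    rw [Finset.card_erase_of_mem hl₀] at h
    exact h
  have hS1 : 1 ≤ S.card := Finset.card_pos.mpr ⟨l₀, hl₀⟩
  rw [FGraph.omega, FGraph.omega, hLG, hLG', hF', hFsplit, hRsplit, hR']
  push_cast [Nat.cast_sub hS1]
  ring

/-! ### Optimal configurations with prescribed external legs -/

lemma stdG_congr {b : Bubble} {S T : Finset (b.B × b.W)} (h : S = T)
    (hS : Inj b S) (hT : Inj b T) : stdG b S hS = stdG b T hT := by
  subst h; rfl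

lemma exists_optimal_closure {b : Bubble} {M : ℤ} (hM : IsMaxOmega2 b M) :
    ∃ (T : Finset (b.B × b.W)) (hT : Inj b T),
      T.card = Fintype.card b.B ∧ T.card = Fintype.card b.W ∧
      (∀ x : b.B, ∃ p ∈ T, p.1 = x) ∧ (∀ w : b.W, ∃ p ∈ T, p.2 = w) ∧
      ∀ l₀ ∈ T, (stdG b (T.erase l₀) (hT.mono (Finset.erase_subset _ _))).omega = M := by
  classical
  obtain ⟨⟨r, hr, hω⟩, hmax⟩ := hM
  obtain ⟨S₀, hS₀, hcB, hcW, hωeq⟩ := normalizeR2 hr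
  -- the uncovered black and white nodes
  have himgB : (S₀.image Prod.fst).card = S₀.card :=
    Finset.card_image_of_injOn (fun p hp q hq h => hS₀.1 p hp q hq h)
  have himgW : (S₀.image Prod.snd).card = S₀.card :=
    Finset.card_image_of_injOn (fun p hp q hq h => hS₀.2 p hp q hq h)
  have hcompB : (Finset.univ \ S₀.image Prod.fst).card = 1 := by
    rw [Finset.card_sdiff_of_subset (Finset.subset_univ _), Finset.card_univ, himgB]
    omega
  have hcompW : (Finset.univ \ S₀.image Prod.snd).card = 1 := by
    rw [Finset.card_sdiff_of_subset (Finset.subset_univ _), Finset.card_univ, himgW]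
    omega
  obtain ⟨β, hβ⟩ := Finset.card_eq_one.mp hcompB
  obtain ⟨ϖ, hϖ⟩ := Finset.card_eq_one.mp hcompW
  have hβnotin : β ∉ S₀.image Prod.fst := by
    have : β ∈ Finset.univ \ S₀.image Prod.fst := by rw [hβ]; exact Finset.mem_singleton_self β
    exact (Finset.mem_sdiff.mp this).2
  have hϖnotin : ϖ ∉ S₀.image Prod.snd := by
    have : ϖ ∈ Finset.univ \ S₀.image Prod.snd := by rw [hϖ]; exact Finset.mem_singleton_self ϖ
    exact (Finset.mem_sdiff.mp this).2
  have hβcov : ∀ x : b.B, x ≠ β → x ∈ S₀.image Prod.fst := by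
    intro x hx
    by_contra h
    have : x ∈ Finset.univ \ S₀.image Prod.fst := Finset.mem_sdiff.mpr ⟨Finset.mem_univ _, h⟩
    rw [hβ, Finset.mem_singleton] at this
    exact hx this
  have hϖcov : ∀ w : b.W, w ≠ ϖ → w ∈ S₀.image Prod.snd := by
    intro w hw
    by_contra h
    have : w ∈ Finset.univ \ S₀.image Prod.snd := Finset.mem_sdiff.mpr ⟨Finset.mem_univ _, h⟩
    rw [hϖ, Finset.mem_singleton] at this
    exact hw this
  have hfstne : ∀ p ∈ S₀, p.1 ≠ β := fun p hp h =>
    hβnotin (h ▸ Finset.mem_image_of_mem Prod.fst hp)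
  have hsndne : ∀ p ∈ S₀, p.2 ≠ ϖ := fun p hp h =>
    hϖnotin (h ▸ Finset.mem_image_of_mem Prod.snd hp)
  -- the closure
  set T : Finset (b.B × b.W) := insert (β, ϖ) S₀ with hTdef
  have hnotmem : (β, ϖ) ∉ S₀ := fun h => hfstne _ h rfl
  have hT : Inj b T := by
    constructor
    · intro p hp q hq h
      rcases Finset.mem_insert.mp hp with hp' | hp' <;>
        rcases Finset.mem_insert.mp hq with hq' | hq'
      · rw [hp', hq']
      · exact absurd (by rw [← h, hp']) (Ne.symm (hfstne q hq'))
      · exact absurd (by rw [h, hq']) (Ne.symm (hfstne p hp'))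
      · exact hS₀.1 p hp' q hq' h
    · intro p hp q hq h
      rcases Finset.mem_insert.mp hp with hp' | hp' <;>
        rcases Finset.mem_insert.mp hq with hq' | hq'
      · rw [hp', hq']
      · exact absurd (by rw [← h, hp']) (Ne.symm (hsndne q hq'))
      · exact absurd (by rw [h, hq']) (Ne.symm (hsndne p hp'))
      · exact hS₀.2 p hp' q hq' h
  have hTcard : T.card = S₀.card + 1 := Finset.card_insert_of_notMem hnotmem
  have hfullB : ∀ x : b.B, ∃ p ∈ T, p.1 = x := by
    intro x
    by_cases hx : x = β
    · exact ⟨(β, ϖ), Finset.mem_insert_self _ _, hx.symm⟩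
    · obtain ⟨p, hp, hpx⟩ := Finset.mem_image.mp (hβcov x hx)
      exact ⟨p, Finset.mem_insert_of_mem hp, hpx⟩
  have hfullW : ∀ w : b.W, ∃ p ∈ T, p.2 = w := by
    intro w
    by_cases hw : w = ϖ
    · exact ⟨(β, ϖ), Finset.mem_insert_self _ _, hw.symm⟩
    · obtain ⟨p, hp, hpw⟩ := Finset.mem_image.mp (hϖcov w hw)
      exact ⟨p, Finset.mem_insert_of_mem hp, hpw⟩
  have hMeq : (stdG b T hT).omega = M + 7 := by
    have hdel := vacuum_delete hT hfullB hfullW (Finset.mem_insert_self (β, ϖ) S₀)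
    have herase : T.erase (β, ϖ) = S₀ := by
      rw [hTdef]; exact Finset.erase_insert hnotmem
    rw [stdG_congr herase (hT.mono (Finset.erase_subset _ _)) hS₀] at hdel
    rw [hωeq, hω] at hdel
    omega
  refine ⟨T, hT, by omega, by omega, hfullB, hfullW, ?_⟩
  intro l₀ hl₀
  have hdel := vacuum_delete hT hfullB hfullW hl₀
  rw [hMeq] at hdel
  omega

lemma exists_optimal_cfg_black {b : Bubble} {M : ℤ} (hM : IsMaxOmega2 b M) (n : b.B) :
    ∃ (S : Finset (b.B × b.W)) (hS : Inj b S),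
      S.card + 1 = Fintype.card b.B ∧ S.card + 1 = Fintype.card b.W ∧
      (∀ p ∈ S, p.1 ≠ n) ∧ (stdG b S hS).omega = M := by
  obtain ⟨T, hT, hcB, hcW, hfullB, _, hdel⟩ := exists_optimal_closure hM
  obtain ⟨p₀, hp₀, hp₀n⟩ := hfullB n
  have hT1 : 1 ≤ T.card := Finset.card_pos.mpr ⟨p₀, hp₀⟩
  refine ⟨T.erase p₀, hT.mono (Finset.erase_subset _ _), ?_, ?_, ?_, hdel p₀ hp₀⟩
  · rw [Finset.card_erase_of_mem hp₀]; omega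
  · rw [Finset.card_erase_of_mem hp₀]; omega
  · intro p hp hpn
    have hmem := Finset.mem_erase.mp hp
    exact hmem.1 (hT.1 p hmem.2 p₀ hp₀ (hpn.trans hp₀n.symm))

lemma exists_optimal_cfg_white {b : Bubble} {M : ℤ} (hM : IsMaxOmega2 b M) (n : b.W) :
    ∃ (S : Finset (b.B × b.W)) (hS : Inj b S),
      S.card + 1 = Fintype.card b.B ∧ S.card + 1 = Fintype.card b.W ∧
      (∀ p ∈ S, p.2 ≠ n) ∧ (stdG b S hS).omega = M := by
  obtain ⟨T, hT, hcB, hcW, _, hfullW, hdel⟩ := exists_optimal_closure hM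
  obtain ⟨p₀, hp₀, hp₀n⟩ := hfullW n
  have hT1 : 1 ≤ T.card := Finset.card_pos.mpr ⟨p₀, hp₀⟩
  refine ⟨T.erase p₀, hT.mono (Finset.erase_subset _ _), ?_, ?_, ?_, hdel p₀ hp₀⟩
  · rw [Finset.card_erase_of_mem hp₀]; omega
  · rw [Finset.card_erase_of_mem hp₀]; omega
  · intro p hp hpn
    have hmem := Finset.mem_erase.mp hp
    exact hmem.1 (hT.2 p hmem.2 p₀ hp₀ (hpn.trans hp₀n.symm))

/-! ### Gluing optimal configurations on a connected sum -/

open Submodule Module in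
lemma glue_omega {b₁ b₂ b₃ : Bubble} {n₁ : b₁.B} {n₂ : b₂.W}
    (hsum : IsConnSumAt b₃ b₁ b₂ n₁ n₂)
    {S₁ : Finset (b₁.B × b₁.W)} (hS₁ : Inj b₁ S₁)
    (hc₁B : S₁.card + 1 = Fintype.card b₁.B) (hc₁W : S₁.card + 1 = Fintype.card b₁.W)
    (h₁n : ∀ p ∈ S₁, p.1 ≠ n₁)
    {S₂ : Finset (b₂.B × b₂.W)} (hS₂ : Inj b₂ S₂)
    (hc₂B : S₂.card + 1 = Fintype.card b₂.B) (hc₂W : S₂.card + 1 = Fintype.card b₂.W)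
    (h₂n : ∀ p ∈ S₂, p.2 ≠ n₂) :
    ∃ r : FGraph, IsR2 r b₃ ∧
      (stdG b₁ S₁ hS₁).omega + (stdG b₂ S₂ hS₂).omega ≤ r.omega := by
  classical
  obtain ⟨eB, eW, hedge⟩ := hsum
  set g₁ : {p // p ∈ S₁} → b₃.B × b₃.W := fun p =>
    (eB.symm (Sum.inl ⟨p.1.1, h₁n p.1 p.2⟩), eW.symm (Sum.inl p.1.2)) with hg₁
  set g₂ : {p // p ∈ S₂} → b₃.B × b₃.W := fun p =>
    (eB.symm (Sum.inr p.1.1), eW.symm (Sum.inr ⟨p.1.2, h₂n p.1 p.2⟩)) with hg₂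
  have hg₁inj : Function.Injective g₁ := by
    intro a c h
    have h2 := congrArg (fun t => t.2) h
    have h3 := Sum.inl.inj (eW.symm.injective h2)
    exact Subtype.ext (hS₁.2 a.1 a.2 c.1 c.2 h3)
  have hg₂inj : Function.Injective g₂ := by
    intro a c h
    have h2 := congrArg (fun t => t.1) h
    have h3 := Sum.inr.inj (eB.symm.injective h2)
    exact Subtype.ext (hS₂.1 a.1 a.2 c.1 c.2 h3)
  set S₃ : Finset (b₃.B × b₃.W) := S₁.attach.image g₁ ∪ S₂.attach.image g₂ with hS₃def
  have hmem₃ : ∀ q ∈ S₃, (∃ p, g₁ p = q) ∨ (∃ p, g₂ p = q) := by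
    intro q hq
    rcases Finset.mem_union.mp hq with h | h
    · obtain ⟨p, -, rfl⟩ := Finset.mem_image.mp h; exact Or.inl ⟨p, rfl⟩
    · obtain ⟨p, -, rfl⟩ := Finset.mem_image.mp h; exact Or.inr ⟨p, rfl⟩
  have hS₃ : Inj b₃ S₃ := by
    constructor
    · intro p hp q hq h
      rcases hmem₃ p hp with ⟨a, rfl⟩ | ⟨a, rfl⟩ <;>
        rcases hmem₃ q hq with ⟨c, rfl⟩ | ⟨c, rfl⟩
      · have h3 := Sum.inl.inj (eB.symm.injective h)
        have h4 : a.1.1 = c.1.1 := congrArg Subtype.val h3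
        exact congrArg g₁ (Subtype.ext (hS₁.1 a.1 a.2 c.1 c.2 h4))
      · exact absurd (eB.symm.injective h) (Sum.inl_ne_inr)
      · exact absurd (eB.symm.injective h) (Sum.inr_ne_inl)
      · have h3 := Sum.inr.inj (eB.symm.injective h)
        exact congrArg g₂ (Subtype.ext (hS₂.1 a.1 a.2 c.1 c.2 h3))
    · intro p hp q hq h
      rcases hmem₃ p hp with ⟨a, rfl⟩ | ⟨a, rfl⟩ <;>
        rcases hmem₃ q hq with ⟨c, rfl⟩ | ⟨c, rfl⟩
      · have h3 := Sum.inl.inj (eW.symm.injective h)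
        exact congrArg g₁ (Subtype.ext (hS₁.2 a.1 a.2 c.1 c.2 h3))
      · exact absurd (eW.symm.injective h) (Sum.inl_ne_inr)
      · exact absurd (eW.symm.injective h) (Sum.inr_ne_inl)
      · have h3 := Sum.inr.inj (eW.symm.injective h)
        have h4 : a.1.2 = c.1.2 := congrArg Subtype.val h3
        exact congrArg g₂ (Subtype.ext (hS₂.2 a.1 a.2 c.1 c.2 h4))
  -- cardinalities
  have hdisjS : Disjoint (S₁.attach.image g₁) (S₂.attach.image g₂) := by
    rw [Finset.disjoint_left]
    intro q hq₁ hq₂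
    obtain ⟨a, -, rfl⟩ := Finset.mem_image.mp hq₁
    obtain ⟨c, -, hc⟩ := Finset.mem_image.mp hq₂
    exact Sum.inr_ne_inl (eB.symm.injective (congrArg (fun t => t.1) hc))
  have hcard₃ : S₃.card = S₁.card + S₂.card := by
    rw [hS₃def, Finset.card_union_of_disjoint hdisjS,
      Finset.card_image_of_injective _ hg₁inj, Finset.card_image_of_injective _ hg₂inj,
      Finset.card_attach, Finset.card_attach]
  have hcard₃B : Fintype.card b₃.B = (Fintype.card b₁.B - 1) + Fintype.card b₂.B := by
    rw [Fintype.card_congr eB, Fintype.card_sum, Fintype.card_subtype_compl,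
      Fintype.card_subtype_eq]
  have hcard₃W : Fintype.card b₃.W = Fintype.card b₁.W + (Fintype.card b₂.W - 1) := by
    rw [Fintype.card_congr eW, Fintype.card_sum, Fintype.card_subtype_compl,
      Fintype.card_subtype_eq]
  have hc₃B : S₃.card + 1 = Fintype.card b₃.B := by omega
  have hc₃W : S₃.card + 1 = Fintype.card b₃.W := by omega
  refine ⟨stdG b₃ S₃ hS₃, isR2_stdG hS₃ hc₃B hc₃W, ?_⟩
  -- the line embeddings
  set ι₁ : (stdG b₁ S₁ hS₁).L ↪ (stdG b₃ S₃ hS₃).L :=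
    ⟨fun l => ⟨g₁ l, Finset.mem_union_left _ (Finset.mem_image_of_mem g₁ (Finset.mem_attach _ l))⟩,
      fun a c h => hg₁inj (congrArg Subtype.val h)⟩ with hι₁
  set ι₂ : (stdG b₂ S₂ hS₂).L ↪ (stdG b₃ S₃ hS₃).L :=
    ⟨fun l => ⟨g₂ l, Finset.mem_union_right _ (Finset.mem_image_of_mem g₂ (Finset.mem_attach _ l))⟩,
      fun a c h => hg₂inj (congrArg Subtype.val h)⟩ with hι₂
  -- edge computations on the connected sum
  have hedgeL : ∀ (i : Fin 4) (x : b₁.B) (hx : x ≠ n₁),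
      b₃.edge i (eB.symm (Sum.inl ⟨x, hx⟩)) = eW.symm (Sum.inl (b₁.edge i x)) := by
    intro i x hx
    apply eW.injective
    rw [hedge, Equiv.apply_symm_apply, Equiv.apply_symm_apply]
    rfl
  have hedgeR_ne : ∀ (i : Fin 4) (y : b₂.B) (h : b₂.edge i y ≠ n₂),
      b₃.edge i (eB.symm (Sum.inr y)) = eW.symm (Sum.inr ⟨b₂.edge i y, h⟩) := by
    intro i y h
    apply eW.injective
    rw [hedge, Equiv.apply_symm_apply, Equiv.apply_symm_apply]
    exact dif_neg h
  have hedgeR_eq : ∀ (i : Fin 4) (y : b₂.B) (h : b₂.edge i y = n₂),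
      b₃.edge i (eB.symm (Sum.inr y)) = eW.symm (Sum.inl (b₁.edge i n₁)) := by
    intro i y h
    apply eW.injective
    rw [hedge, Equiv.apply_symm_apply, Equiv.apply_symm_apply]
    exact dif_pos h
  have hrel₁ : RelEmb ι₁ := by
    intro i l l'
    rw [stdG_nextRel, stdG_nextRel]
    show l'.1.2 = b₁.edge i l.1.1 ↔
      eW.symm (Sum.inl l'.1.2) = b₃.edge i (eB.symm (Sum.inl ⟨l.1.1, h₁n l.1 l.2⟩))
    rw [hedgeL i l.1.1 (h₁n l.1 l.2)]
    constructor
    · intro h; rw [h]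
    · intro h; exact Sum.inl.inj (eW.symm.injective h)
  have hrel₂ : RelEmb ι₂ := by
    intro i l l'
    rw [stdG_nextRel, stdG_nextRel]
    show l'.1.2 = b₂.edge i l.1.1 ↔
      eW.symm (Sum.inr ⟨l'.1.2, h₂n l'.1 l'.2⟩) = b₃.edge i (eB.symm (Sum.inr l.1.1))
    by_cases hc : b₂.edge i l.1.1 = n₂
    · rw [hedgeR_eq i l.1.1 hc]
      constructor
      · intro h; exact absurd (h.trans hc) (h₂n l'.1 l'.2)
      · intro h; exact absurd (eW.symm.injective h) Sum.inr_ne_inl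
    · rw [hedgeR_ne i l.1.1 hc]
      constructor
      · intro h
        have he : (⟨l'.1.2, h₂n l'.1 l'.2⟩ : {y : b₂.W // y ≠ n₂}) =
            ⟨b₂.edge i l.1.1, hc⟩ := Subtype.ext h
        rw [he]
      · intro h
        have := Sum.inr.inj (eW.symm.injective h)
        exact congrArg Subtype.val this
  -- face counting
  set j₁ : Fin 4 × Finset (stdG b₁ S₁ hS₁).L → Fin 4 × Finset (stdG b₃ S₃ hS₃).L :=
    fun p => (p.1, p.2.map ι₁) with hj₁
  set j₂ : Fin 4 × Finset (stdG b₂ S₂ hS₂).L → Fin 4 × Finset (stdG b₃ S₃ hS₃).L :=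
    fun p => (p.1, p.2.map ι₂) with hj₂
  have hj₁inj : Function.Injective j₁ := by
    intro p q h
    exact Prod.ext (congrArg (fun t => t.1) h)
      (Finset.map_injective _ (congrArg (fun t => t.2) h))
  have hj₂inj : Function.Injective j₂ := by
    intro p q h
    exact Prod.ext (congrArg (fun t => t.1) h)
      (Finset.map_injective _ (congrArg (fun t => t.2) h))
  have hsub₁ : j₁ '' (stdG b₁ S₁ hS₁).faceSet ⊆ (stdG b₃ S₃ hS₃).faceSet := by
    rintro - ⟨p, hp, rfl⟩
    exact face_map ι₁ hrel₁ hp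
  have hsub₂ : j₂ '' (stdG b₂ S₂ hS₂).faceSet ⊆ (stdG b₃ S₃ hS₃).faceSet := by
    rintro - ⟨p, hp, rfl⟩
    exact face_map ι₂ hrel₂ hp
  have hdisjim : Disjoint (j₁ '' (stdG b₁ S₁ hS₁).faceSet) (j₂ '' (stdG b₂ S₂ hS₂).faceSet) := by
    rw [Set.disjoint_left]
    rintro - ⟨p, hp, rfl⟩ ⟨q, hq, hqe⟩
    obtain ⟨x, hx⟩ := hp.1
    have hx3 : ι₁ x ∈ (j₁ p).2 := Finset.mem_map_of_mem _ hx
    rw [← hqe] at hx3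
    obtain ⟨a, -, ha⟩ := Finset.mem_map.mp hx3
    have := congrArg (fun t => (t.1 : b₃.B × b₃.W).1) ha
    exact Sum.inr_ne_inl (eB.symm.injective this)
  set Ψ : Set (Fin 4 × Finset (stdG b₃ S₃ hS₃).L) :=
    j₁ '' (stdG b₁ S₁ hS₁).faceSet ∪ j₂ '' (stdG b₂ S₂ hS₂).faceSet with hΨ
  set Θ : Set (Fin 4 × Finset (stdG b₃ S₃ hS₃).L) := (stdG b₃ S₃ hS₃).faceSet \ Ψ with hΘ
  have hΨsub : Ψ ⊆ (stdG b₃ S₃ hS₃).faceSet := Set.union_subset hsub₁ hsub₂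
  have hFsplit : (stdG b₃ S₃ hS₃).numF =
      (stdG b₁ S₁ hS₁).numF + (stdG b₂ S₂ hS₂).numF + Θ.ncard := by
    rw [FGraph.numF_eq, FGraph.numF_eq, FGraph.numF_eq]
    have hun : (stdG b₃ S₃ hS₃).faceSet = Ψ ∪ Θ := by
      rw [hΘ, Set.union_diff_cancel hΨsub]
    rw [hun, Set.ncard_union_eq (Set.disjoint_sdiff_right) (Set.toFinite _) (Set.toFinite _),
      hΨ, Set.ncard_union_eq hdisjim (Set.toFinite _) (Set.toFinite _),
      Set.ncard_image_of_injective _ hj₁inj, Set.ncard_image_of_injective _ hj₂inj]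
  have hRbound : (stdG b₃ S₃ hS₃).numR ≤
      (stdG b₁ S₁ hS₁).numR + (stdG b₂ S₂ hS₂).numR + Θ.ncard := by
    rw [FGraph.numR_eq_finrank, FGraph.numR_eq_finrank, FGraph.numR_eq_finrank]
    have hun : (stdG b₃ S₃ hS₃).faceSet = (j₁ '' (stdG b₁ S₁ hS₁).faceSet) ∪
        ((j₂ '' (stdG b₂ S₂ hS₂).faceSet) ∪ Θ) := by
      rw [← Set.union_assoc, ← hΨ, hΘ, Set.union_diff_cancel hΨsub]
    rw [hun, Set.image_union, Set.image_union, Submodule.span_union, Submodule.span_union]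
    refine le_trans (Submodule.finrank_add_le_finrank_add_finrank _ _) ?_
    have h1 : finrank ℚ (span ℚ ((stdG b₃ S₃ hS₃).col '' (j₁ '' (stdG b₁ S₁ hS₁).faceSet))) =
        finrank ℚ (span ℚ ((stdG b₁ S₁ hS₁).col '' (stdG b₁ S₁ hS₁).faceSet)) := by
      have : (stdG b₃ S₃ hS₃).col '' (j₁ '' (stdG b₁ S₁ hS₁).faceSet) =
          extZero ι₁ '' ((stdG b₁ S₁ hS₁).col '' (stdG b₁ S₁ hS₁).faceSet) := by
        rw [← Set.image_comp, ← Set.image_comp]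
        exact Set.image_congr (fun p hp => col_map_face ι₁ hrel₁ hp)
      rw [this, finrank_span_image_extZero]
    have h2 : finrank ℚ (span ℚ ((stdG b₃ S₃ hS₃).col '' (j₂ '' (stdG b₂ S₂ hS₂).faceSet))) =
        finrank ℚ (span ℚ ((stdG b₂ S₂ hS₂).col '' (stdG b₂ S₂ hS₂).faceSet)) := by
      have : (stdG b₃ S₃ hS₃).col '' (j₂ '' (stdG b₂ S₂ hS₂).faceSet) =
          extZero ι₂ '' ((stdG b₂ S₂ hS₂).col '' (stdG b₂ S₂ hS₂).faceSet) := by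
        rw [← Set.image_comp, ← Set.image_comp]
        exact Set.image_congr (fun p hp => col_map_face ι₂ hrel₂ hp)
      rw [this, finrank_span_image_extZero]
    have h3 : finrank ℚ (span ℚ ((stdG b₃ S₃ hS₃).col '' Θ)) ≤ Θ.ncard := by
      refine le_trans (finrank_span_le_ncard _ (Set.Finite.image _ (Set.toFinite _))) ?_
      exact Set.ncard_image_le (Set.toFinite _)
    have h4 := Submodule.finrank_add_le_finrank_add_finrank
      (span ℚ ((stdG b₃ S₃ hS₃).col '' (j₂ '' (stdG b₂ S₂ hS₂).faceSet)))
      (span ℚ ((stdG b₃ S₃ hS₃).col '' Θ))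
    omega
  have hL₃ : (stdG b₃ S₃ hS₃).numL = (stdG b₁ S₁ hS₁).numL + (stdG b₂ S₂ hS₂).numL := by
    rw [stdG_numL, stdG_numL, stdG_numL, hcard₃]
  rw [FGraph.omega, FGraph.omega, FGraph.omega, hL₃, hFsplit]
  have h5 := hRbound
  push_cast
  push_cast at h5
  nlinarith [h5]
/-- **Lemma 1 (connected sums and bubble dimensions).**
If `b₃` is a connected sum of `b₁` and `b₂`, then the bubble dimensions
satisfy `d̃_{b₁} + d̃_{b₂} ≥ d̃_{b₃} + 2`. -/
theorem connSum_bubbleDim (b₁ b₂ b₃ : Bubble) (n₁ : b₁.B) (n₂ : b₂.W)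
    (hsum : IsConnSumAt b₃ b₁ b₂ n₁ n₂)
    (d₁ d₂ d₃ : ℤ) (h₁ : HasBubbleDim b₁ d₁) (h₂ : HasBubbleDim b₂ d₂)
    (h₃ : HasBubbleDim b₃ d₃) :
    d₃ + 2 ≤ d₁ + d₂ := by
  obtain ⟨M₁, hM₁, hd₁⟩ := h₁
  obtain ⟨M₂, hM₂, hd₂⟩ := h₂
  obtain ⟨M₃, hM₃, hd₃⟩ := h₃
  obtain ⟨S₁, hS₁, hc₁B, hc₁W, h₁n, hω₁⟩ := exists_optimal_cfg_black hM₁ n₁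
  obtain ⟨S₂, hS₂, hc₂B, hc₂W, h₂n, hω₂⟩ := exists_optimal_cfg_white hM₂ n₂
  obtain ⟨r, hrR2, hrω⟩ := glue_omega hsum hS₁ hc₁B hc₁W h₁n hS₂ hc₂B hc₂W h₂n
  have hle : r.omega ≤ M₃ := hM₃.2 r hrR2
  rw [hω₁, hω₂] at hrω
  omega
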